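/- (Hoffman–Wielandt inequality for Hermitian matrices.) Let A, B ∈ ℂ^{n×n} be Hermitian matrices, and let λ_1(A) ≥ … ≥ λ_n(A) and λ_1(B) ≥ … ≥ λ_n(B) be their eigenvalues listed in nonincreasing order (with multiplicity). Then Σ_{i=1}^n (λ_i(A) − λ_i(B))² ≤ ‖A − B‖_F². -/

import Mathlib

open Finset Matrix

lemma hw_mul_star (z : ℂ) : z * star z = ((‖z‖ ^ 2 : ℝ) : ℂ) := by
  rw [show (star z) = (starRingEnd ℂ) z from rfl, Complex.mul_conj, Complex.normSq_eq_norm_sq]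

/-- Doubly stochastic averaging of a monovarying pair is at most the aligned sum. -/
lemma hw_key {n : ℕ} (S : Matrix (Fin n) (Fin n) ℝ)
    (hS : S ∈ doublyStochastic ℝ (Fin n)) (a b : Fin n → ℝ)
    (ha : Antitone a) (hb : Antitone b) :
    ∑ i, ∑ j, S i j * (a i * b j) ≤ ∑ i, a i * b i := by
  obtain ⟨w, hw0, hw1, hwS⟩ := exists_eq_sum_perm_of_mem_doublyStochastic hS
  have hmono : Monovary a b := by
    intro i j hij
    exact ha (le_of_not_ge fun h => absurd (hb h) (not_le_of_gt hij))
  have hperm : ∀ σ : Equiv.Perm (Fin n),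
      ∑ i, ∑ j, (σ.permMatrix ℝ) i j * (a i * b j) ≤ ∑ i, a i * b i := by
    intro σ
    have hrow : ∀ i, ∑ j, (σ.permMatrix ℝ) i j * (a i * b j) = a i * b (σ i) := by
      intro i
      rw [Finset.sum_eq_single (σ i)]
      · simp [Equiv.Perm.permMatrix, PEquiv.toMatrix_apply, Equiv.toPEquiv_apply]
      · intro j _ hj
        simp [Equiv.Perm.permMatrix, PEquiv.toMatrix_apply, Equiv.toPEquiv_apply, hj.symm,
          Ne.symm hj]
      · simp
    simp only [hrow]
    exact hmono.sum_mul_comp_perm_le_sum_mul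
  calc ∑ i, ∑ j, S i j * (a i * b j)
      = ∑ i, ∑ j, ∑ σ : Equiv.Perm (Fin n), w σ * ((σ.permMatrix ℝ) i j * (a i * b j)) := by
        refine Finset.sum_congr rfl fun i _ => Finset.sum_congr rfl fun j _ => ?_
        rw [← hwS]
        simp [Matrix.sum_apply, Finset.sum_mul, mul_assoc]
    _ = ∑ i, ∑ σ : Equiv.Perm (Fin n), ∑ j, w σ * ((σ.permMatrix ℝ) i j * (a i * b j)) :=
        Finset.sum_congr rfl fun i _ => Finset.sum_comm
    _ = ∑ σ : Equiv.Perm (Fin n), ∑ i, ∑ j, w σ * ((σ.permMatrix ℝ) i j * (a i * b j)) :=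
        Finset.sum_comm
    _ = ∑ σ : Equiv.Perm (Fin n), w σ * ∑ i, ∑ j, (σ.permMatrix ℝ) i j * (a i * b j) := by
        simp [Finset.mul_sum]
    _ ≤ ∑ σ : Equiv.Perm (Fin n), w σ * ∑ i, a i * b i :=
        Finset.sum_le_sum fun σ _ => mul_le_mul_of_nonneg_left (hperm σ) (hw0 σ)
    _ = ∑ i, a i * b i := by rw [← Finset.sum_mul, hw1, one_mul]

theorem stmt10 (n : ℕ) (A B U W : Matrix (Fin n) (Fin n) ℂ)
    (hU : U ∈ Matrix.unitaryGroup (Fin n) ℂ) (hW : W ∈ Matrix.unitaryGroup (Fin n) ℂ)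
    (α β : Fin n → ℝ) (hα : Antitone α) (hβ : Antitone β)
    (hA : A = U * Matrix.diagonal (fun i => ((α i : ℝ) : ℂ)) * Uᴴ)
    (hB : B = W * Matrix.diagonal (fun i => ((β i : ℝ) : ℂ)) * Wᴴ) :
    (∑ i, (α i - β i) ^ 2) ≤ ∑ i, ∑ j, ‖(A - B) i j‖ ^ 2 := by
  have hUU : Uᴴ * U = 1 := hU.1
  have hUU' : U * Uᴴ = 1 := hU.2
  have hWW : Wᴴ * W = 1 := hW.1
  have hWW' : W * Wᴴ = 1 := hW.2
  set V : Matrix (Fin n) (Fin n) ℂ := Uᴴ * W with hV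
  set S : Matrix (Fin n) (Fin n) ℝ := fun i j => ‖V i j‖ ^ 2 with hSdef
  set Dα : Matrix (Fin n) (Fin n) ℂ := Matrix.diagonal (fun i => ((α i : ℝ) : ℂ)) with hDα
  set Dβ : Matrix (Fin n) (Fin n) ℂ := Matrix.diagonal (fun i => ((β i : ℝ) : ℂ)) with hDβ
  have hVH : Vᴴ = Wᴴ * U := by rw [hV, conjTranspose_mul, conjTranspose_conjTranspose]
  have hVV : V * Vᴴ = 1 := by
    rw [hV, hVH]
    calc Uᴴ * W * (Wᴴ * U) = Uᴴ * (W * Wᴴ) * U := by noncomm_ring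
    _ = 1 := by rw [hWW', mul_one, hUU]
  have hVV' : Vᴴ * V = 1 := by
    rw [hV, hVH]
    calc Wᴴ * U * (Uᴴ * W) = Wᴴ * (U * Uᴴ) * W := by noncomm_ring
    _ = 1 := by rw [hUU', mul_one, hWW]
  have hSmem : S ∈ doublyStochastic ℝ (Fin n) := by
    rw [mem_doublyStochastic_iff_sum]
    refine ⟨fun i j => by positivity, fun i => ?_, fun j => ?_⟩
    · have h1 := congrArg (fun M => M i i) hVV
      simp only [Matrix.mul_apply, Matrix.one_apply_eq, Matrix.conjTranspose_apply] at h1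
      have h2 : ∑ j, ((‖V i j‖ ^ 2 : ℝ) : ℂ) = 1 := by
        rw [← Finset.sum_congr rfl fun j _ => hw_mul_star (V i j)]
        exact h1
      exact_mod_cast h2
    · have h1 := congrArg (fun M => M j j) hVV'
      simp only [Matrix.mul_apply, Matrix.one_apply_eq, Matrix.conjTranspose_apply] at h1
      have h2 : ∑ i, ((‖V i j‖ ^ 2 : ℝ) : ℂ) = 1 := by
        rw [← Finset.sum_congr rfl fun i _ => hw_mul_star (V i j)]
        rw [← h1]
        exact Finset.sum_congr rfl fun i _ => mul_comm _ _
      exact_mod_cast h2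
  -- Hermitian-ness
  have hDαH : Dαᴴ = Dα := by
    rw [hDα, Matrix.diagonal_conjTranspose]
    refine congrArg Matrix.diagonal ?_
    funext i
    exact Complex.conj_ofReal (α i)
  have hDβH : Dβᴴ = Dβ := by
    rw [hDβ, Matrix.diagonal_conjTranspose]
    refine congrArg Matrix.diagonal ?_
    funext i
    exact Complex.conj_ofReal (β i)
  have hAH : Aᴴ = A := by
    rw [hA, conjTranspose_mul, conjTranspose_mul, conjTranspose_conjTranspose, hDαH]
    noncomm_ring
  have hBH : Bᴴ = B := by
    rw [hB, conjTranspose_mul, conjTranspose_mul, conjTranspose_conjTranspose, hDβH]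
    noncomm_ring
  -- traces
  have tA : Matrix.trace (A * A) = ((∑ i, α i ^ 2 : ℝ) : ℂ) := by
    rw [hA]
    have h1 : (U * Dα * Uᴴ) * (U * Dα * Uᴴ) = U * (Dα * (Uᴴ * U) * Dα) * Uᴴ := by noncomm_ring
    rw [h1, hUU, mul_one, Matrix.trace_mul_cycle, ← Matrix.mul_assoc, hUU, one_mul, hDα,
      Matrix.diagonal_mul_diagonal, Matrix.trace_diagonal]
    push_cast
    exact Finset.sum_congr rfl fun i _ => (sq (α i : ℂ)).symm
  have tB : Matrix.trace (B * B) = ((∑ i, β i ^ 2 : ℝ) : ℂ) := by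
    rw [hB]
    have h1 : (W * Dβ * Wᴴ) * (W * Dβ * Wᴴ) = W * (Dβ * (Wᴴ * W) * Dβ) * Wᴴ := by noncomm_ring
    rw [h1, hWW, mul_one, Matrix.trace_mul_cycle, ← Matrix.mul_assoc, hWW, one_mul, hDβ,
      Matrix.diagonal_mul_diagonal, Matrix.trace_diagonal]
    push_cast
    exact Finset.sum_congr rfl fun i _ => (sq (β i : ℂ)).symm
  set T : ℝ := ∑ i, ∑ j, S i j * (α i * β j) with hT
  have tAB : Matrix.trace (A * B) = ((T : ℝ) : ℂ) := by
    rw [hA, hB]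
    have h1 : (U * Dα * Uᴴ) * (W * Dβ * Wᴴ) = U * (Dα * ((Uᴴ * W) * (Dβ * Wᴴ))) := by
      noncomm_ring
    rw [h1, Matrix.trace_mul_comm]
    have h2 : Dα * ((Uᴴ * W) * (Dβ * Wᴴ)) * U = Dα * (V * (Dβ * Vᴴ)) := by
      rw [hV, hVH]; noncomm_ring
    rw [h2]
    have h3 : Matrix.trace (Dα * (V * (Dβ * Vᴴ))) =
        ∑ i, ∑ j, ((α i : ℂ)) * (V i j * (((β j : ℂ)) * star (V i j))) := by
      simp [Matrix.trace, Matrix.diag, Matrix.mul_apply, hDα, hDβ, Matrix.diagonal_apply,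
        Matrix.conjTranspose_apply, Finset.mul_sum, Finset.sum_mul, ite_mul, mul_ite]
    rw [h3]
    have h4 : ∀ i j, ((α i : ℂ)) * (V i j * (((β j : ℂ)) * star (V i j)))
        = ((S i j * (α i * β j) : ℝ) : ℂ) := by
      intro i j
      rw [show ((α i : ℂ)) * (V i j * (((β j : ℂ)) * star (V i j)))
          = (V i j * star (V i j)) * ((α i : ℂ) * (β j : ℂ)) from by ring, hw_mul_star]
      simp only [hSdef]
      push_cast
      ring
    rw [Finset.sum_congr rfl fun i _ => Finset.sum_congr rfl fun j _ => h4 i j, hT]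
    push_cast
    rfl
  have tBA : Matrix.trace (B * A) = ((T : ℝ) : ℂ) := by
    rw [Matrix.trace_mul_comm]; exact tAB
  -- Frobenius norm as a trace
  have hABH : (A - B)ᴴ = A - B := by rw [Matrix.conjTranspose_sub, hAH, hBH]
  have hMH : ∀ i j, (A - B) j i = star ((A - B) i j) := by
    intro i j
    have h5 : star ((A - B) j i) = (A - B) i j := by
      rw [← Matrix.conjTranspose_apply, hABH]
    rw [← h5, star_star]
  have ht : Matrix.trace ((A - B) * (A - B)) = ((∑ i, ∑ j, ‖(A - B) i j‖ ^ 2 : ℝ) : ℂ) := by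
    have h1 : Matrix.trace ((A - B) * (A - B)) =
        ∑ i, ∑ j, (A - B) i j * star ((A - B) i j) := by
      simp only [Matrix.trace, Matrix.diag, Matrix.mul_apply]
      exact Finset.sum_congr rfl fun i _ => Finset.sum_congr rfl fun j _ => by rw [hMH i j]
    rw [h1, Finset.sum_congr rfl fun i _ => Finset.sum_congr rfl fun j _ =>
      hw_mul_star ((A - B) i j)]
    push_cast
    rfl
  have texp : Matrix.trace ((A - B) * (A - B))
      = Matrix.trace (A * A) - Matrix.trace (A * B) - Matrix.trace (B * A)
        + Matrix.trace (B * B) := by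
    have : (A - B) * (A - B) = A * A - A * B - B * A + B * B := by noncomm_ring
    rw [this, Matrix.trace_add, Matrix.trace_sub, Matrix.trace_sub]
  have hfrobC : ((∑ i, ∑ j, ‖(A - B) i j‖ ^ 2 : ℝ) : ℂ)
      = ((∑ i, α i ^ 2 + ∑ i, β i ^ 2 - 2 * T : ℝ) : ℂ) := by
    rw [← ht, texp, tA, tB, tAB, tBA]
    push_cast
    ring
  have hfrob : (∑ i, ∑ j, ‖(A - B) i j‖ ^ 2 : ℝ)
      = ∑ i, α i ^ 2 + ∑ i, β i ^ 2 - 2 * T := by exact_mod_cast hfrobC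
  have hkey : T ≤ ∑ i, α i * β i := hw_key S hSmem α β hα hβ
  have hexpand : ∑ i, (α i - β i) ^ 2
      = ∑ i, α i ^ 2 + ∑ i, β i ^ 2 - 2 * ∑ i, α i * β i := by
    rw [Finset.sum_congr rfl fun i _ =>
      (by ring : (α i - β i) ^ 2 = α i ^ 2 + β i ^ 2 - 2 * (α i * β i))]
    rw [Finset.sum_sub_distrib, Finset.sum_add_distrib, ← Finset.mul_sum]
  rw [hexpand, hfrob]
  linarith
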